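/- Let A be a finitely generated ℤ-graded commutative K-algebra over a field K of characteristic zero. If A admits a nonzero locally nilpotent derivation, then A admits a nonzero ℤ-homogeneous locally nilpotent derivation. -/

import Mathlib

/-- A derivation is locally nilpotent if every element is annihilated by some power. -/
def IsLND {K A : Type*} [CommSemiring K] [CommRing A] [Algebra K A]
    (D : Derivation K A A) : Prop :=
  ∀ a : A, ∃ n : ℕ, (⇑D)^[n] a = 0

/-- A derivation of a graded algebra is homogeneous of degree `d` if it shifts degrees by `d`. -/
def IsHomogDeriv {K A ι : Type*} [CommSemiring K] [CommRing A] [Algebra K A] [Add ι]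
    (𝒜 : ι → Submodule K A) (D : Derivation K A A) (d : ι) : Prop :=
  ∀ (i : ι) (a : A), a ∈ 𝒜 i → D a ∈ 𝒜 (i + d)


open DirectSum

section Aux

variable {K A : Type*} [CommSemiring K] [CommRing A] [Algebra K A]
variable (𝒜 : ℤ → Submodule K A) [GradedAlgebra 𝒜]

/-- Projection onto degree-`i` component, as a linear map `A →ₗ[K] A`. -/
noncomputable def projL (i : ℤ) : A →ₗ[K] A :=
  (𝒜 i).subtype ∘ₗ (DirectSum.component K ℤ (fun j => 𝒜 j) i) ∘ₗ
    (DirectSum.decomposeLinearEquiv 𝒜).toLinearMap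

lemma projL_apply (i : ℤ) (a : A) : projL 𝒜 i a = (DirectSum.decompose 𝒜 a i : A) := rfl

lemma projL_mem (i : ℤ) (a : A) : projL 𝒜 i a ∈ 𝒜 i := (DirectSum.decompose 𝒜 a i).2

lemma projL_of_mem_same {i : ℤ} {a : A} (ha : a ∈ 𝒜 i) : projL 𝒜 i a = a :=
  DirectSum.decompose_of_mem_same 𝒜 ha

lemma projL_of_mem_ne {i j : ℤ} {a : A} (ha : a ∈ 𝒜 i) (hij : i ≠ j) : projL 𝒜 j a = 0 :=
  DirectSum.decompose_of_mem_ne 𝒜 ha hij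

lemma sum_projL [∀ (i : ℤ) (x : 𝒜 i), Decidable (x ≠ 0)] (a : A) :
    ∑ i ∈ (DirectSum.decompose 𝒜 a).support, projL 𝒜 i a = a :=
  DirectSum.sum_support_decompose 𝒜 a

lemma eq_zero_of_projL [∀ (i : ℤ) (x : 𝒜 i), Decidable (x ≠ 0)] {a : A}
    (h : ∀ i, projL 𝒜 i a = 0) : a = 0 := by
  rw [← sum_projL 𝒜 a]
  exact Finset.sum_eq_zero fun i _ => h i

end Aux

section HComp

variable {K A : Type*} [CommSemiring K] [CommRing A] [Algebra K A]
variable (𝒜 : ℤ → Submodule K A) [GradedAlgebra 𝒜] (D : Derivation K A A)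

/-- The degree-`d` homogeneous component of `D`, as a linear map. -/
noncomputable def hcompL (d : ℤ) : A →ₗ[K] A :=
  (DirectSum.toModule K ℤ A (fun i => projL 𝒜 (i + d) ∘ₗ D.toLinearMap ∘ₗ (𝒜 i).subtype)) ∘ₗ
    (DirectSum.decomposeLinearEquiv 𝒜).toLinearMap

lemma hcompL_of_mem {i : ℤ} {a : A} (ha : a ∈ 𝒜 i) (d : ℤ) :
    hcompL 𝒜 D d a = projL 𝒜 (i + d) (D a) := by
  have : (DirectSum.decomposeLinearEquiv 𝒜).toLinearMap a = DirectSum.lof K ℤ (fun j => 𝒜 j) i ⟨a, ha⟩ := by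
    simp [DirectSum.decomposeLinearEquiv_apply, DirectSum.decompose_of_mem 𝒜 ha, DirectSum.lof_eq_of]
  rw [hcompL, LinearMap.comp_apply, this, DirectSum.toModule_lof]
  rfl

lemma hcompL_mem {i : ℤ} {a : A} (ha : a ∈ 𝒜 i) (d : ℤ) :
    hcompL 𝒜 D d a ∈ 𝒜 (i + d) := by
  rw [hcompL_of_mem 𝒜 D ha]; exact projL_mem 𝒜 _ _

lemma projL_D_of_mem {i j : ℤ} {a : A} (ha : a ∈ 𝒜 i) :
    projL 𝒜 j (D a) = hcompL 𝒜 D (j - i) a := by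
  rw [hcompL_of_mem 𝒜 D ha, show i + (j - i) = j by omega]

lemma hcompL_sum [∀ (i : ℤ) (x : 𝒜 i), Decidable (x ≠ 0)] (d : ℤ) (a : A) :
    hcompL 𝒜 D d a =
      ∑ i ∈ (DirectSum.decompose 𝒜 a).support, projL 𝒜 (i + d) (D (projL 𝒜 i a)) := by
  conv_lhs => rw [← sum_projL 𝒜 a, map_sum]
  refine Finset.sum_congr rfl fun i _ => ?_
  rw [hcompL_of_mem 𝒜 D (projL_mem 𝒜 i a)]

end HComp

section Leibniz

variable {K A : Type*} [CommSemiring K] [CommRing A] [Algebra K A]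
variable (𝒜 : ℤ → Submodule K A) [GradedAlgebra 𝒜] (D : Derivation K A A)

lemma top_graded : (⨆ i, 𝒜 i) = ⊤ :=
  (DirectSum.Decomposition.isInternal 𝒜).submodule_iSup_eq_top

lemma projL_mul_left {i : ℤ} {a : A} (ha : a ∈ 𝒜 i) (k : ℤ) (x : A) :
    projL 𝒜 (i + k) (a * x) = a * projL 𝒜 k x := by
  have hx : x ∈ ⨆ j, 𝒜 j := by rw [top_graded 𝒜]; trivial
  refine Submodule.iSup_induction 𝒜
    (motive := fun x => projL 𝒜 (i + k) (a * x) = a * projL 𝒜 k x) hx ?_ ?_ ?_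
  · intro j y hy
    have hmul : a * y ∈ 𝒜 (i + j) := SetLike.mul_mem_graded ha hy
    by_cases hjk : j = k
    · subst hjk
      rw [projL_of_mem_same 𝒜 hmul, projL_of_mem_same 𝒜 hy]
    · rw [projL_of_mem_ne 𝒜 hmul (by omega), projL_of_mem_ne 𝒜 hy hjk, mul_zero]
  · simp
  · intro y z hy hz
    rw [mul_add, map_add, map_add, mul_add, hy, hz]

lemma hcompL_leibniz (d : ℤ) (a b : A) :
    hcompL 𝒜 D d (a * b) = a * hcompL 𝒜 D d b + b * hcompL 𝒜 D d a := by
  have ha : a ∈ ⨆ i, 𝒜 i := by rw [top_graded 𝒜]; trivial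
  refine Submodule.iSup_induction 𝒜
    (motive := fun a => ∀ b, hcompL 𝒜 D d (a * b) = a * hcompL 𝒜 D d b + b * hcompL 𝒜 D d a)
    ha ?_ ?_ ?_ b
  · intro i a ha b
    have hb : b ∈ ⨆ j, 𝒜 j := by rw [top_graded 𝒜]; trivial
    refine Submodule.iSup_induction 𝒜
      (motive := fun b => hcompL 𝒜 D d (a * b) = a * hcompL 𝒜 D d b + b * hcompL 𝒜 D d a)
      hb ?_ ?_ ?_
    · intro j b hb
      have hmul : a * b ∈ 𝒜 (i + j) := SetLike.mul_mem_graded ha hb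
      rw [hcompL_of_mem 𝒜 D hmul, Derivation.leibniz, smul_eq_mul, smul_eq_mul, map_add,
        show i + j + d = i + (j + d) by ring, projL_mul_left 𝒜 ha,
        show i + (j + d) = j + (i + d) by ring, projL_mul_left 𝒜 hb,
        hcompL_of_mem 𝒜 D ha, hcompL_of_mem 𝒜 D hb]
    · simp
    · intro y z hy hz
      rw [mul_add, map_add, map_add, hy, hz]; ring
  · intro b; simp
  · intro y z hy hz b
    rw [add_mul, map_add, map_add, hy b, hz b]; ring

/-- The degree-`d` homogeneous component of `D`, as a derivation. -/
noncomputable def hD (d : ℤ) : Derivation K A A where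
  toLinearMap := hcompL 𝒜 D d
  map_one_eq_zero' := by
    have h1 : (1 : A) ∈ 𝒜 0 := SetLike.one_mem_graded 𝒜
    show hcompL 𝒜 D d 1 = 0
    rw [hcompL_of_mem 𝒜 D h1, Derivation.map_one_eq_zero, map_zero]
  leibniz' := fun a b => by
    show hcompL 𝒜 D d (a * b) = _
    rw [hcompL_leibniz 𝒜 D d a b]; rfl

lemma hD_apply (d : ℤ) (a : A) : hD 𝒜 D d a = hcompL 𝒜 D d a := rfl

end Leibniz

section Top

variable {K A : Type*} [CommSemiring K] [CommRing A] [Algebra K A]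
variable (𝒜 : ℤ → Submodule K A) [GradedAlgebra 𝒜] (D : Derivation K A A)

lemma step_lemma {t : ℤ} (htop : ∀ d, t < d → ∀ x, hcompL 𝒜 D d x = 0)
    (b : A) (m : ℤ) (hb : ∀ j, m < j → projL 𝒜 j b = 0) :
    (∀ j, m + t < j → projL 𝒜 j (D b) = 0) ∧
      projL 𝒜 (m + t) (D b) = hcompL 𝒜 D t (projL 𝒜 m b) := by
  classical
  have hsupp : ∀ i ∈ (DirectSum.decompose 𝒜 b).support, i ≤ m := by
    intro i hi
    by_contra hlt
    push_neg at hlt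
    have := hb i hlt
    rw [projL_apply] at this
    simp only [DFinsupp.mem_support_iff] at hi
    exact hi (by ext; exact this)
  have hDb : D b = ∑ i ∈ (DirectSum.decompose 𝒜 b).support, D (projL 𝒜 i b) := by
    conv_lhs => rw [← sum_projL 𝒜 b, map_sum]
  have hterm : ∀ (j i : ℤ),
      projL 𝒜 j (D (projL 𝒜 i b)) = hcompL 𝒜 D (j - i) (projL 𝒜 i b) := by
    intro j i
    exact projL_D_of_mem 𝒜 D (projL_mem 𝒜 i b)
  constructor
  · intro j hj
    rw [hDb, map_sum]
    refine Finset.sum_eq_zero fun i hi => ?_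
    rw [hterm j i]
    exact htop (j - i) (by have := hsupp i hi; omega) _
  · rw [hDb, map_sum]
    rw [Finset.sum_eq_single m
      (fun i hi hne => by
        rw [hterm _ i]
        exact htop (m + t - i) (by have := hsupp i hi; omega) _)
      (fun hm => by
        have : projL 𝒜 m b = 0 := by
          rw [projL_apply]
          simp only [DFinsupp.mem_support_iff, not_not] at hm
          rw [hm]; rfl
        rw [this, map_zero, map_zero])]
    rw [hterm _ m, show m + t - m = t by ring]

end Top

section Iter

variable {K A : Type*} [CommSemiring K] [CommRing A] [Algebra K A]
variable (𝒜 : ℤ → Submodule K A) [GradedAlgebra 𝒜] (D : Derivation K A A)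

lemma iterate_lemma {t : ℤ} (htop : ∀ d, t < d → ∀ x, hcompL 𝒜 D d x = 0)
    {i : ℤ} {a : A} (ha : a ∈ 𝒜 i) (n : ℕ) :
    (∀ j, i + n * t < j → projL 𝒜 j ((⇑D)^[n] a) = 0) ∧
      projL 𝒜 (i + n * t) ((⇑D)^[n] a) = (⇑(hD 𝒜 D t))^[n] a := by
  induction n with
  | zero =>
    simp only [Nat.cast_zero, zero_mul, add_zero, Function.iterate_zero, id]
    exact ⟨fun j hj => projL_of_mem_ne 𝒜 ha (by omega), projL_of_mem_same 𝒜 ha⟩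
  | succ n ih =>
    have hstep := step_lemma 𝒜 D htop ((⇑D)^[n] a) (i + n * t) ih.1
    have hcast : i + ((n : ℕ) + 1 : ℕ) * t = i + (n : ℤ) * t + t := by push_cast; ring
    constructor
    · intro j hj
      rw [hcast] at hj
      rw [Function.iterate_succ_apply']
      exact hstep.1 j hj
    · rw [hcast, Function.iterate_succ_apply', Function.iterate_succ_apply',
        hstep.2, ih.2]
      rfl

lemma iterate_zero_of_zero (E : Derivation K A A) {x : A} {n : ℕ} (h : (⇑E)^[n] x = 0)
    {N : ℕ} (hN : n ≤ N) : (⇑E)^[N] x = 0 := by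
  rw [← Nat.sub_add_cancel hN, Function.iterate_add_apply, h]
  exact Function.iterate_fixed (map_zero E) _

lemma hD_isLND {t : ℤ} (htop : ∀ d, t < d → ∀ x, hcompL 𝒜 D d x = 0)
    (hlnd : ∀ a : A, ∃ n : ℕ, (⇑D)^[n] a = 0) :
    ∀ a : A, ∃ n : ℕ, (⇑(hD 𝒜 D t))^[n] a = 0 := by
  intro a
  classical
  have hcomp : ∀ i : ℤ, ∃ n : ℕ, (⇑(hD 𝒜 D t))^[n] (projL 𝒜 i a) = 0 := by
    intro i
    obtain ⟨n, hn⟩ := hlnd (projL 𝒜 i a)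
    refine ⟨n, ?_⟩
    have h2 := (iterate_lemma 𝒜 D htop (projL_mem 𝒜 i a) n).2
    rw [hn, map_zero] at h2
    exact h2.symm
  choose g hg using hcomp
  set s := (DirectSum.decompose 𝒜 a).support with hs
  refine ⟨s.sup g, ?_⟩
  have hiter : ∀ (x : A), (⇑(hD 𝒜 D t))^[s.sup g] x = (((hD 𝒜 D t).toLinearMap) ^ (s.sup g)) x :=
    fun x => (Module.End.pow_apply _ _ _).symm
  conv_lhs => rw [show a = ∑ i ∈ s, projL 𝒜 i a from (sum_projL 𝒜 a).symm]
  rw [hiter, map_sum]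
  refine Finset.sum_eq_zero fun i hi => ?_
  rw [← hiter]
  exact iterate_zero_of_zero _ (hg i) (Finset.le_sup hi)

end Iter

section Fin

variable {K A : Type*} [CommSemiring K] [CommRing A] [Algebra K A]
variable (𝒜 : ℤ → Submodule K A) [GradedAlgebra 𝒜] (D : Derivation K A A)

lemma exists_hD_ne_zero (hD0 : D ≠ 0) : ∃ d, hD 𝒜 D d ≠ 0 := by
  classical
  obtain ⟨x, hx⟩ : ∃ x, D x ≠ 0 := by
    by_contra h; push_neg at h
    exact hD0 (by ext a; simpa using h a)
  have h1 : ∃ i, D (projL 𝒜 i x) ≠ 0 := by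
    by_contra h; push_neg at h
    apply hx
    conv_lhs => rw [← sum_projL 𝒜 x, map_sum]
    exact Finset.sum_eq_zero fun i _ => h i
  obtain ⟨i, hi⟩ := h1
  have h2 : ∃ j, projL 𝒜 j (D (projL 𝒜 i x)) ≠ 0 := by
    by_contra h; push_neg at h
    exact hi (eq_zero_of_projL 𝒜 h)
  obtain ⟨j, hj⟩ := h2
  refine ⟨j - i, fun h0 => ?_⟩
  rw [projL_D_of_mem 𝒜 D (projL_mem 𝒜 i x)] at hj
  apply hj
  rw [← hD_apply]
  simpa using DFunLike.congr_fun h0 (projL 𝒜 i x)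

lemma finite_hD_ne_zero [Algebra.FiniteType K A] : {d : ℤ | hD 𝒜 D d ≠ 0}.Finite := by
  classical
  obtain ⟨s, hs⟩ := Algebra.FiniteType.out (R := K) (A := A)
  have hx : ∀ x : A, {d : ℤ | hcompL 𝒜 D d x ≠ 0}.Finite := by
    intro x
    apply Set.Finite.subset (Set.finite_coe_iff.mp (Finset.finite_toSet
      ((DirectSum.decompose 𝒜 x).support.biUnion
        (fun i => ((DirectSum.decompose 𝒜 (D (projL 𝒜 i x))).support).image (fun j => j - i)))))
    intro d hd
    simp only [Set.mem_setOf_eq] at hd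
    rw [hcompL_sum 𝒜 D d x] at hd
    obtain ⟨i, hi, hne⟩ := Finset.exists_ne_zero_of_sum_ne_zero hd
    simp only [Finset.coe_biUnion, Set.mem_iUnion, Finset.mem_coe, Finset.mem_image]
    refine ⟨i, hi, i + d, ?_, by ring⟩
    rw [DFinsupp.mem_support_iff]
    intro hz
    apply hne
    rw [projL_apply, hz]; rfl
  have hsub : {d : ℤ | hD 𝒜 D d ≠ 0} ⊆ ⋃ x ∈ (s : Set A), {d : ℤ | hcompL 𝒜 D d x ≠ 0} := by
    intro d hd
    by_contra hmem
    simp only [Set.mem_iUnion, Set.mem_setOf_eq, not_exists, not_not] at hmem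
    apply hd
    apply Derivation.ext_of_adjoin_eq_top (R := K) (s : Set A) hs
    intro x hxmem
    simp only [Derivation.coe_zero, Pi.zero_apply]
    rw [hD_apply]
    exact hmem x hxmem
  exact Set.Finite.subset (Set.Finite.biUnion s.finite_toSet fun x _ => hx x) hsub

end Fin

theorem stmt3 {K A : Type*} [Field K] [CharZero K] [CommRing A] [Algebra K A]
    [Algebra.FiniteType K A]
    (𝒜 : ℤ → Submodule K A) [GradedAlgebra 𝒜]
    (h : ∃ D : Derivation K A A, D ≠ 0 ∧ IsLND D) :
    ∃ (d : ℤ) (D : Derivation K A A), D ≠ 0 ∧ IsLND D ∧ IsHomogDeriv 𝒜 D d := by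
  classical
  obtain ⟨D, hD0, hlnd⟩ := h
  have hfin := finite_hD_ne_zero 𝒜 D
  have hne := exists_hD_ne_zero 𝒜 D hD0
  have hSne : hfin.toFinset.Nonempty := by
    obtain ⟨d, hd⟩ := hne
    exact ⟨d, by simpa using hd⟩
  set t := hfin.toFinset.max' hSne with ht
  have htmem : hD 𝒜 D t ≠ 0 := by
    have := hfin.toFinset.max'_mem hSne
    simpa using this
  have htop : ∀ d, t < d → ∀ x, hcompL 𝒜 D d x = 0 := by
    intro d hd x
    have hz : hD 𝒜 D d = 0 := by
      by_contra h0
      have hmem : d ∈ hfin.toFinset := by simpa using h0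
      exact absurd (hfin.toFinset.le_max' d hmem) (not_le.mpr hd)
    calc hcompL 𝒜 D d x = hD 𝒜 D d x := rfl
      _ = 0 := by rw [hz]; simp
  refine ⟨t, hD 𝒜 D t, htmem, fun a => hD_isLND 𝒜 D htop hlnd a, ?_⟩
  intro i a ha
  rw [hD_apply, hcompL_of_mem 𝒜 D ha]
  exact projL_mem 𝒜 _ _
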